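/- Let T be a bounded operator on a complex Hilbert space H with N(T) = N(T*). Then T attains its minimum modulus if and only if T* attains its minimum modulus. -/

import Mathlib

open ContinuousLinearMap MeasureTheory

variable {E F : Type*} [NormedAddCommGroup E] [InnerProductSpace ℂ E] [CompleteSpace E]
  [NormedAddCommGroup F] [InnerProductSpace ℂ F] [CompleteSpace F]

/-- The point spectrum (set of eigenvalues). -/
def pointSpec (T : E →L[ℂ] E) : Set ℂ := {l | ∃ x : E, x ≠ 0 ∧ T x = l • x}

/-- The essential spectrum of a (self-adjoint) bounded operator: eigenvalues of infinite
multiplicity, limit points of the point spectrum, and the continuous spectrum. -/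
def essSpec (T : E →L[ℂ] E) : Set ℂ :=
  {l | (¬ FiniteDimensional ℂ (LinearMap.ker ((T - l • (1 : E →L[ℂ] E) : E →L[ℂ] E) : E →ₗ[ℂ] E))) ∨
       l ∈ closure (pointSpec T \ {l}) ∨
       (l ∈ spectrum ℂ T ∧ Function.Injective ⇑(T - l • (1 : E →L[ℂ] E)) ∧
         Dense (Set.range ⇑(T - l • (1 : E →L[ℂ] E))))}

/-- The discrete spectrum: isolated eigenvalues of finite multiplicity. -/
def discSpec (T : E →L[ℂ] E) : Set ℂ :=
  {l | l ∈ pointSpec T ∧ FiniteDimensional ℂ (LinearMap.ker ((T - l • (1 : E →L[ℂ] E) : E →L[ℂ] E) : E →ₗ[ℂ] E)) ∧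
       l ∉ closure (spectrum ℂ T \ {l})}

/-- The minimum modulus m(T) = inf {‖Tx‖ : ‖x‖ = 1}. -/
noncomputable def minMod (T : E →L[ℂ] F) : ℝ := sInf ((fun x => ‖T x‖) '' {x : E | ‖x‖ = 1})

/-- T attains its minimum modulus. -/
def MinAttain (T : E →L[ℂ] F) : Prop := ∃ x : E, ‖x‖ = 1 ∧ ‖T x‖ = minMod T

/-- T attains its norm. -/
def NormAttain (T : E →L[ℂ] F) : Prop := ∃ x : E, ‖x‖ = 1 ∧ ‖T x‖ = ‖T‖

/-- T is absolutely minimum attaining (AM). -/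
def AbsMinAttain (T : E →L[ℂ] F) : Prop :=
  ∀ M : Submodule ℂ E, IsClosed (M : Set E) → MinAttain (T.comp M.subtypeL)

/-- T is absolutely norm attaining (AN). -/
def AbsNormAttain (T : E →L[ℂ] F) : Prop :=
  ∀ M : Submodule ℂ E, IsClosed (M : Set E) → NormAttain (T.comp M.subtypeL)

/-- S is the Moore-Penrose (generalized) inverse of T. -/
def MoorePenrose (T S : E →L[ℂ] E) : Prop :=
  T ∘L S ∘L T = T ∧ S ∘L T ∘L S = S ∧ IsSelfAdjoint (T ∘L S) ∧ IsSelfAdjoint (S ∘L T)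

/-- T is paranormal: ‖Tx‖² ≤ ‖T²x‖‖x‖ for all x. -/
def Paranormal (T : E →L[ℂ] E) : Prop := ∀ x : E, ‖T x‖ ^ 2 ≤ ‖T (T x)‖ * ‖x‖

variable {H : Type*} [NormedAddCommGroup H] [InnerProductSpace ℂ H] [CompleteSpace H]


private lemma minAttain_adjoint_aux (T : H →L[ℂ] H)
    (hk : LinearMap.ker (T : H →ₗ[ℂ] H) = LinearMap.ker ((adjoint T : H →L[ℂ] H) : H →ₗ[ℂ] H)) :
    MinAttain T → MinAttain (adjoint T) := by
  rintro ⟨x, hx1, hxm⟩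
  have hbdd : ∀ S : H →L[ℂ] H, BddBelow ((fun z => ‖S z‖) '' {z : H | ‖z‖ = 1}) := by
    intro S
    exact ⟨0, by rintro r ⟨z, _, rfl⟩; positivity⟩
  have hne : ∀ S : H →L[ℂ] H, ((fun z => ‖S z‖) '' {z : H | ‖z‖ = 1}).Nonempty :=
    fun S => ⟨‖S x‖, x, hx1, rfl⟩
  have hle : ∀ (S : H →L[ℂ] H) (z : H), ‖z‖ = 1 → minMod S ≤ ‖S z‖ :=
    fun S z hz => csInf_le (hbdd S) ⟨z, hz, rfl⟩
  have hge0 : ∀ S : H →L[ℂ] H, 0 ≤ minMod S :=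
    fun S => le_csInf (hne S) (by rintro r ⟨z, _, rfl⟩; positivity)
  set m := minMod T with hmdef
  by_cases hmz : m = 0
  · have hTx : T x = 0 := by rw [← norm_eq_zero, hxm]; exact hmz
    have hTsx : adjoint T x = 0 := by
      have hx' : x ∈ LinearMap.ker ((adjoint T : H →L[ℂ] H) : H →ₗ[ℂ] H) := by
        rw [← hk]; exact LinearMap.mem_ker.mpr hTx
      exact hx'
    have h1 : minMod (adjoint T) ≤ 0 := by
      have h := hle (adjoint T) x hx1
      rwa [hTsx, norm_zero] at h
    exact ⟨x, hx1, by rw [hTsx, norm_zero]; linarith [hge0 (adjoint T)]⟩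
  have hmpos : 0 < m := lt_of_le_of_ne (hge0 T) (Ne.symm hmz)
  -- T is bounded below by m
  have hbb : ∀ z : H, m * ‖z‖ ≤ ‖T z‖ := by
    intro z
    rcases eq_or_ne z 0 with rfl | hz
    · simp
    · have hzn : ‖z‖ ≠ 0 := norm_ne_zero_iff.mpr hz
      have h1 : ‖(‖z‖⁻¹ : ℝ) • z‖ = 1 := by
        rw [norm_smul, norm_inv, norm_norm, inv_mul_cancel₀ hzn]
      have h2 := hle T _ h1
      rw [map_smul_of_tower, norm_smul, norm_inv, norm_norm] at h2
      have h3 : m * ‖z‖ ≤ ‖z‖⁻¹ * ‖T z‖ * ‖z‖ :=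
        mul_le_mul_of_nonneg_right h2 (norm_nonneg z)
      rwa [mul_comm (‖z‖⁻¹) _, mul_assoc, inv_mul_cancel₀ hzn, mul_one] at h3
  have hker : LinearMap.ker (T : H →ₗ[ℂ] H) = ⊥ := by
    rw [LinearMap.ker_eq_bot, ContinuousLinearMap.coe_coe]
    intro a b hab
    have h0 : T (a - b) = 0 := by rw [map_sub, hab, sub_self]
    have h1 := hbb (a - b)
    rw [h0, norm_zero] at h1
    have h2 : ‖a - b‖ = 0 := le_antisymm (by nlinarith [norm_nonneg (a - b)]) (norm_nonneg _)
    rwa [norm_eq_zero, sub_eq_zero] at h2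
  have hanti : AntilipschitzWith ⟨m⁻¹, by positivity⟩ T := by
    apply T.antilipschitz_of_bound
    intro z
    have h1 := hbb z
    change ‖z‖ ≤ m⁻¹ * ‖T z‖
    rw [← mul_le_mul_iff_right₀ hmpos, ← mul_assoc, mul_inv_cancel₀ hmz, one_mul]
    exact hbb z
  have hcr : CompleteSpace (LinearMap.range (T : H →ₗ[ℂ] H)) := hanti.completeSpace_range_clm
  have hrange : LinearMap.range (T : H →ₗ[ℂ] H) = ⊤ := by
    rw [← Submodule.orthogonal_eq_bot_iff, Submodule.eq_bot_iff]
    intro w hw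
    have h0 : (inner ℂ (T (adjoint T w)) w : ℂ) = 0 :=
      (Submodule.mem_orthogonal _ w).mp hw _ ⟨adjoint T w, rfl⟩
    have h1 : (inner ℂ (adjoint T w) (adjoint T w) : ℂ) = 0 := by
      rw [ContinuousLinearMap.adjoint_inner_right]; exact h0
    have hTsw : adjoint T w = 0 := inner_self_eq_zero.mp h1
    have hw0 : w ∈ LinearMap.ker (T : H →ₗ[ℂ] H) := by rw [hk]; exact LinearMap.mem_ker.mpr hTsw
    rw [hker] at hw0
    simpa using hw0
  let e : H ≃L[ℂ] H := ContinuousLinearEquiv.ofBijective T hker hrange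
  have heT : ∀ z : H, e z = T z := fun z => rfl
  have hTS : T ∘L (e.symm : H →L[ℂ] H) = ContinuousLinearMap.id ℂ H := by
    ext z
    have h := e.apply_symm_apply z
    rw [heT] at h
    simpa using h
  have hSnorm : ‖(e.symm : H →L[ℂ] H)‖ ≤ m⁻¹ := by
    apply ContinuousLinearMap.opNorm_le_bound _ (by positivity)
    intro z
    have h1 := hbb ((e.symm : H →L[ℂ] H) z)
    have h2 : T ((e.symm : H →L[ℂ] H) z) = z := by
      have := congrArg (fun f : H →L[ℂ] H => f z) hTS
      simpa using this
    rw [h2] at h1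
    rw [← mul_le_mul_iff_right₀ hmpos, ← mul_assoc, mul_inv_cancel₀ hmz, one_mul]
    exact h1
  have hadj : adjoint (e.symm : H →L[ℂ] H) ∘L adjoint T = ContinuousLinearMap.id ℂ H := by
    rw [← ContinuousLinearMap.adjoint_comp, hTS]
    exact ContinuousLinearMap.adjoint_id
  -- adjoint T is bounded below by m
  have hbbadj : ∀ z : H, m * ‖z‖ ≤ ‖adjoint T z‖ := by
    intro z
    have h1 : adjoint (e.symm : H →L[ℂ] H) (adjoint T z) = z := by
      have := congrArg (fun f : H →L[ℂ] H => f z) hadj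
      simpa using this
    have h2 : ‖z‖ ≤ ‖adjoint (e.symm : H →L[ℂ] H)‖ * ‖adjoint T z‖ := by
      calc ‖z‖ = ‖adjoint (e.symm : H →L[ℂ] H) (adjoint T z)‖ := by rw [h1]
        _ ≤ ‖adjoint (e.symm : H →L[ℂ] H)‖ * ‖adjoint T z‖ :=
            ContinuousLinearMap.le_opNorm _ _
    have h3 : ‖adjoint (e.symm : H →L[ℂ] H)‖ = ‖(e.symm : H →L[ℂ] H)‖ :=
      ContinuousLinearMap.adjoint.norm_map _
    have h4 : ‖z‖ ≤ m⁻¹ * ‖adjoint T z‖ := by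
      refine h2.trans ?_
      apply mul_le_mul_of_nonneg_right _ (norm_nonneg _)
      rw [h3]; exact hSnorm
    calc m * ‖z‖ ≤ m * (m⁻¹ * ‖adjoint T z‖) := by
          exact mul_le_mul_of_nonneg_left h4 hmpos.le
      _ = ‖adjoint T z‖ := by field_simp
  have hgeadj : m ≤ minMod (adjoint T) := by
    apply le_csInf (hne (adjoint T))
    rintro r ⟨z, hz, rfl⟩
    have := hbbadj z
    rw [Set.mem_setOf_eq] at hz
    rwa [hz, mul_one] at this
  -- Rayleigh: x is an eigenvector of (adjoint T) ∘L T
  set A : H →L[ℂ] H := adjoint T ∘L T with hA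
  have hAsa : IsSelfAdjoint A := by
    rw [ContinuousLinearMap.isSelfAdjoint_iff']
    rw [hA, ContinuousLinearMap.adjoint_comp, ContinuousLinearMap.adjoint_adjoint]
  have hre : ∀ z : H, A.reApplyInnerSelf z = ‖T z‖ ^ 2 := by
    intro z
    rw [ContinuousLinearMap.reApplyInnerSelf_apply]
    have h1 : (inner ℂ (A z) z : ℂ) = inner ℂ (T z) (T z) := by
      simp only [hA, ContinuousLinearMap.comp_apply]
      exact ContinuousLinearMap.adjoint_inner_left T z (T z)
    rw [h1]
    exact inner_self_eq_norm_sq (T z)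
  have hmin : IsMinOn A.reApplyInnerSelf (Metric.sphere (0 : H) ‖x‖) x := by
    intro z hz
    have hz1 : ‖z‖ = 1 := by
      have := Metric.mem_sphere.mp hz
      rwa [dist_zero_right, hx1] at this
    have h1 : m ≤ ‖T z‖ := by simpa using hle T z hz1
    simp only [Set.mem_setOf_eq, hre]
    rw [hxm]
    exact pow_le_pow_left₀ hmpos.le h1 2
  have hxne : x ≠ 0 := by
    intro h; rw [h, norm_zero] at hx1; exact zero_ne_one hx1
  have hEig : A x = (↑(A.rayleighQuotient x) : ℂ) • x :=
    hAsa.eq_smul_self_of_isLocalExtrOn (Or.inl hmin.localize)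
  have hray : A.rayleighQuotient x = m ^ 2 := by
    rw [ContinuousLinearMap.rayleighQuotient, hre, hx1, hxm]
    norm_num
  -- the witness
  set y : H := (m⁻¹ : ℝ) • T x with hy
  have hy1 : ‖y‖ = 1 := by
    rw [hy, norm_smul, norm_inv, Real.norm_eq_abs, abs_of_nonneg hmpos.le, hxm,
      inv_mul_cancel₀ hmz]
  have hTy : adjoint T y = (m⁻¹ : ℝ) • ((m ^ 2 : ℝ) : ℂ) • x := by
    rw [hy, map_smul_of_tower]
    congr 1
    have h1 : adjoint T (T x) = A x := rfl
    rw [h1, hEig, hray]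
  have hnTy : ‖adjoint T y‖ = m := by
    rw [hTy, norm_smul, norm_smul, hx1, mul_one, Real.norm_eq_abs,
      abs_of_nonneg (by positivity), Complex.norm_real, Real.norm_eq_abs,
      abs_of_nonneg (by positivity), sq, inv_mul_cancel_left₀ hmz]
  refine ⟨y, hy1, ?_⟩
  rw [hnTy]
  exact le_antisymm hgeadj (by rw [← hnTy]; exact hle (adjoint T) y hy1)

theorem stmt14 (T : H →L[ℂ] H) (hk : LinearMap.ker (T : H →ₗ[ℂ] H) = LinearMap.ker ((adjoint T : H →L[ℂ] H) : H →ₗ[ℂ] H)) :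
    MinAttain T ↔ MinAttain (adjoint T) := by
  constructor
  · exact minAttain_adjoint_aux T hk
  · intro h
    have h2 := minAttain_adjoint_aux (adjoint T)
      (by rw [ContinuousLinearMap.adjoint_adjoint]; exact hk.symm) h
    rwa [ContinuousLinearMap.adjoint_adjoint] at h2
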